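/- Let G be a connected undirected graph with non-negative edge weights, r a vertex, α > 1, and β ≥ 1 + 2/(α−1). Then G contains a spanning tree T such that for every vertex v the distance from r to v in T is at most α times the distance from r to v in G, and the total weight of T is at most β times the weight of a minimum spanning tree of G. -/

import Mathlib

open SimpleGraph Finset

/-- Weight of a walk: sum of edge weights along it. -/
noncomputable def walkWeight {V : Type*} {G : SimpleGraph V} (w : Sym2 V → ℝ)
    {u v : V} (p : G.Walk u v) : ℝ :=
  (p.edges.map w).sum

/-- Shortest-path distance between `u` and `v` in `G` with edge weights `w`. -/
noncomputable def wdist {V : Type*} (G : SimpleGraph V) (w : Sym2 V → ℝ) (u v : V) : ℝ :=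
  sInf {x | ∃ p : G.Walk u v, walkWeight w p = x}

open scoped Classical in
/-- Total weight of (the edges of) a graph. -/
noncomputable def gweight {V : Type*} [Fintype V] (G : SimpleGraph V) (w : Sym2 V → ℝ) : ℝ :=
  ∑ e ∈ G.edgeSet.toFinset, w e

namespace LASTAux

variable {V : Type*} {G H H' : SimpleGraph V} {u v r a c : V} {w : Sym2 V → ℝ}

lemma walkWeight_nonneg (hw : ∀ e, 0 ≤ w e) (p : G.Walk u v) : 0 ≤ walkWeight w p :=
  List.sum_nonneg (by
    rintro x hx
    obtain ⟨e, _, rfl⟩ := List.mem_map.1 hx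
    exact hw e)

lemma walkWeight_nil : walkWeight w (Walk.nil : G.Walk u u) = 0 := by
  simp [walkWeight]

lemma walkWeight_cons (h : G.Adj u v) (p : G.Walk v a) :
    walkWeight w (Walk.cons h p) = w s(u, v) + walkWeight w p := by
  simp [walkWeight]

lemma walkWeight_append (p : G.Walk u v) (q : G.Walk v a) :
    walkWeight w (p.append q) = walkWeight w p + walkWeight w q := by
  simp [walkWeight]

lemma walkWeight_concat (p : G.Walk u v) (h : G.Adj v a) :
    walkWeight w (p.concat h) = walkWeight w p + w s(v, a) := by
  simp [walkWeight, Walk.edges_concat]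

lemma walkWeight_reverse (p : G.Walk u v) :
    walkWeight w p.reverse = walkWeight w p := by
  simp [walkWeight, Walk.edges_reverse, List.map_reverse, List.sum_reverse]

lemma walkWeight_transfer (p : G.Walk u v) (hp : ∀ e ∈ p.edges, e ∈ H.edgeSet) :
    walkWeight w (p.transfer H hp) = walkWeight w p := by
  simp [walkWeight, Walk.edges_transfer]

lemma walkWeight_mapLe (hle : G ≤ H) (p : G.Walk u v) :
    walkWeight w (p.mapLe hle) = walkWeight w p := by
  induction p with
  | nil => simp [Walk.mapLe, walkWeight]
  | cons h p ih =>
      rw [walkWeight_cons]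
      rw [show (Walk.cons h p).mapLe hle = Walk.cons (hle h) (p.mapLe hle) from rfl]
      rw [walkWeight_cons, ih]

lemma wdist_nonneg (hw : ∀ e, 0 ≤ w e) (G : SimpleGraph V) (u v : V) :
    0 ≤ wdist G w u v :=
  Real.sInf_nonneg (by rintro x ⟨p, rfl⟩; exact walkWeight_nonneg hw p)

lemma wdist_le_walkWeight (hw : ∀ e, 0 ≤ w e) (p : G.Walk u v) :
    wdist G w u v ≤ walkWeight w p :=
  csInf_le ⟨0, by rintro x ⟨q, rfl⟩; exact walkWeight_nonneg hw q⟩ ⟨p, rfl⟩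

lemma wdist_self_le (hw : ∀ e, 0 ≤ w e) (G : SimpleGraph V) (u : V) :
    wdist G w u u ≤ 0 := by
  simpa [walkWeight_nil] using wdist_le_walkWeight hw (Walk.nil : G.Walk u u)

lemma walkWeight_bypass_le [DecidableEq V] (hw : ∀ e, 0 ≤ w e) (p : G.Walk u v) :
    walkWeight w p.bypass ≤ walkWeight w p := by
  obtain ⟨l, hperm, hsl⟩ := (p.bypass_isPath.edges_nodup).subperm p.edges_bypass_subset
  calc walkWeight w p.bypass = (l.map w).sum := ((hperm.map w).sum_eq).symm
    _ ≤ (p.edges.map w).sum := (hsl.map w).sum_le_sum (by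
        rintro x hx
        obtain ⟨e, _, rfl⟩ := List.mem_map.1 hx
        exact hw e)
    _ = walkWeight w p := rfl

/-- Attainment of the shortest-path distance by a path. -/
lemma exists_walk_attained [Fintype V] (hw : ∀ e, 0 ≤ w e) (h : G.Reachable u v) :
    ∃ p : G.Walk u v, p.IsPath ∧ walkWeight w p = wdist G w u v := by
  classical
  obtain ⟨q₀⟩ := h
  have hne : (Finset.univ : Finset (G.Path u v)).Nonempty := ⟨q₀.toPath, Finset.mem_univ _⟩
  obtain ⟨p₀, _, hmin⟩ := Finset.exists_min_image Finset.univ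
    (fun p : G.Path u v => walkWeight w p.1) hne
  refine ⟨p₀.1, p₀.2, le_antisymm ?_ (wdist_le_walkWeight hw _)⟩
  refine le_csInf ⟨walkWeight w q₀, q₀, rfl⟩ ?_
  rintro b ⟨q, rfl⟩
  exact le_trans (hmin q.toPath (Finset.mem_univ _)) (walkWeight_bypass_le hw q)

lemma wdist_anti (hw : ∀ e, 0 ≤ w e) [Fintype V] (hle : H ≤ H') (h : H.Reachable u v) :
    wdist H' w u v ≤ wdist H w u v := by
  obtain ⟨p, _, hp⟩ := exists_walk_attained hw h
  calc wdist H' w u v ≤ walkWeight w (p.mapLe hle) := wdist_le_walkWeight hw _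
    _ = wdist H w u v := by rw [walkWeight_mapLe, hp]

lemma wdist_le_adj (hw : ∀ e, 0 ≤ w e) [Fintype V] (hadj : H.Adj a c)
    (hreach : H.Reachable r a) :
    wdist H w r c ≤ wdist H w r a + w s(a, c) := by
  obtain ⟨p, _, hp⟩ := exists_walk_attained hw hreach
  calc wdist H w r c ≤ walkWeight w (p.concat hadj) := wdist_le_walkWeight hw _
    _ = wdist H w r a + w s(a, c) := by rw [walkWeight_concat, hp]


section Gweight

variable {V : Type*} [Fintype V] {G H : SimpleGraph V} {w : Sym2 V → ℝ}

lemma gweight_nonneg (hw : ∀ e, 0 ≤ w e) : 0 ≤ gweight G w :=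
  Finset.sum_nonneg fun e _ => hw e

lemma gweight_mono (hw : ∀ e, 0 ≤ w e) (hle : G ≤ H) : gweight G w ≤ gweight H w := by
  classical
  apply Finset.sum_le_sum_of_subset_of_nonneg
  · intro e he
    rw [Set.mem_toFinset] at he ⊢
    exact edgeSet_mono hle he
  · exact fun e _ _ => hw e

lemma gweight_eq (G : SimpleGraph V) (w : Sym2 V → ℝ) (inst : Fintype G.edgeSet) :
    gweight G w = ∑ e ∈ @Set.toFinset _ G.edgeSet inst, w e := by
  unfold gweight
  refine Finset.sum_congr ?_ fun _ _ => rfl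
  apply Finset.ext
  intro e
  simp only [Set.mem_toFinset]

lemma gweight_sup_le (hw : ∀ e, 0 ≤ w e) (G H : SimpleGraph V) :
    gweight (G ⊔ H) w ≤ gweight G w + gweight H w := by
  classical
  rw [gweight_eq (G ⊔ H) w inferInstance, gweight_eq G w inferInstance,
    gweight_eq H w inferInstance]
  refine le_trans (Finset.sum_le_sum_of_subset_of_nonneg
    (t := G.edgeSet.toFinset ∪ H.edgeSet.toFinset) ?_ fun e _ _ => hw e) ?_
  · intro e he
    rw [Set.mem_toFinset, edgeSet_sup] at he
    rw [Finset.mem_union, Set.mem_toFinset, Set.mem_toFinset]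
    exact he
  · rw [← Finset.sum_union_inter]
    exact le_add_of_nonneg_right (Finset.sum_nonneg fun e _ => hw e)

lemma gweight_mono' (hw : ∀ e, 0 ≤ w e) {G H : SimpleGraph V} (hle : G ≤ H) :
    gweight G w ≤ gweight H w := gweight_mono hw hle

end Gweight

section SPT

open LASTAux

variable {V : Type*} [Fintype V] {w : Sym2 V → ℝ}

lemma walk_cons_decomp {G : SimpleGraph V} {a b : V} (p : G.Walk a b) (h : a ≠ b) :
    ∃ (c : V) (h1 : G.Adj a c) (q : G.Walk c b), p = Walk.cons h1 q := by
  cases p with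
  | nil => exact absurd rfl h
  | cons h1 q => exact ⟨_, h1, q, rfl⟩

/-- Shortest path tree: a spanning tree preserving distances from the root. -/
lemma exists_spt {H : SimpleGraph V} (hw : ∀ e, 0 ≤ w e) (hH : H.Connected) (r : V) :
    ∃ T : SimpleGraph V, T ≤ H ∧ T.IsTree ∧ ∀ v, wdist T w r v ≤ wdist H w r v := by
  classical
  have hA : ∀ v : V, ∃ p : H.Walk r v, walkWeight w p = wdist H w r v ∧
      ∀ q : H.Walk r v, walkWeight w q = wdist H w r v → p.length ≤ q.length := by
    intro v
    obtain ⟨p0, _, hp0⟩ := exists_walk_attained hw (hH.preconnected r v)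
    have hs : {n | ∃ p : H.Walk r v, walkWeight w p = wdist H w r v ∧ p.length = n}.Nonempty :=
      ⟨p0.length, p0, hp0, rfl⟩
    obtain ⟨p, hp, hplen⟩ := Nat.sInf_mem hs
    exact ⟨p, hp, fun q hq => hplen ▸ Nat.sInf_le ⟨q, hq, rfl⟩⟩
  choose P hP hPmin using hA
  have hwr : wdist H w r r = 0 :=
    le_antisymm (wdist_self_le hw H r) (wdist_nonneg hw H r r)
  have hpar : ∀ v : V, v ≠ r → ∃ u : V, H.Adj u v ∧
      wdist H w r u + w s(u, v) = wdist H w r v ∧ (P u).length < (P v).length := by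
    intro v hv
    obtain ⟨u, h1, q', hq⟩ := walk_cons_decomp (P v).reverse (fun hh => hv hh)
    have hWv : wdist H w r v = w s(v, u) + walkWeight w q' := by
      rw [← hP v, ← walkWeight_reverse (P v), hq, walkWeight_cons]
    have htri : wdist H w r v ≤ wdist H w r u + w s(u, v) :=
      wdist_le_adj hw h1.symm (hH.preconnected r u)
    have hqq : wdist H w r u ≤ walkWeight w q'.reverse := wdist_le_walkWeight hw _
    rw [walkWeight_reverse] at hqq
    have hsw : s(u, v) = s(v, u) := Sym2.eq_swap
    have heq : wdist H w r u = walkWeight w q' := by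
      rw [hsw] at htri; linarith
    have hattain : walkWeight w q'.reverse = wdist H w r u := by
      rw [walkWeight_reverse, heq]
    have hlen : (P u).length < (P v).length := by
      have h2 := hPmin u q'.reverse hattain
      have h3 : q'.reverse.length = q'.length := Walk.length_reverse q'
      have h4 : (P v).length = q'.length + 1 := by
        rw [← Walk.length_reverse (P v), hq, Walk.length_cons]
      omega
    exact ⟨u, h1.symm, by rw [heq, hWv, hsw]; ring, hlen⟩
  choose! par hadj hsum hlen using hpar
  set T : SimpleGraph V := SimpleGraph.fromEdgeSet {e | ∃ v, v ≠ r ∧ e = s(par v, v)} with hT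
  have hTle : T ≤ H := by
    rw [hT, ← fromEdgeSet_edgeSet H]
    apply fromEdgeSet_mono
    rintro e ⟨v, hv, rfl⟩
    exact (H.mem_edgeSet).2 (hadj v hv)
  have hTadj : ∀ v, v ≠ r → T.Adj (par v) v := by
    intro v hv
    rw [hT, fromEdgeSet_adj]
    exact ⟨⟨v, hv, rfl⟩, (hadj v hv).ne⟩
  -- T-adjacency characterization at a max-rank vertex
  have hadj_char : ∀ m y : V, T.Adj m y → (P y).length ≤ (P m).length →
      m ≠ r ∧ y = par m := by
    intro m y hmy hrank
    rw [hT, fromEdgeSet_adj] at hmy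
    obtain ⟨⟨v, hv, he⟩, _⟩ := hmy
    rcases Sym2.eq_iff.1 he with ⟨h1, h2⟩ | ⟨h1, h2⟩
    · exfalso
      subst h2
      rw [h1] at hrank
      exact absurd (hlen y hv) (not_lt.2 hrank)
    · subst h1; exact ⟨hv, h2⟩
  have key : ∀ (n : ℕ) (v : V), (P v).length ≤ n →
      ∃ q : T.Walk r v, walkWeight w q = wdist H w r v := by
    intro n
    induction n with
    | zero =>
        intro v hle
        by_cases hv : v = r
        · subst hv; exact ⟨Walk.nil, by rw [walkWeight_nil, hwr]⟩
        · exact absurd (lt_of_lt_of_le (hlen v hv) hle) (by omega)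
    | succ n ih =>
        intro v hle
        by_cases hv : v = r
        · subst hv; exact ⟨Walk.nil, by rw [walkWeight_nil, hwr]⟩
        · obtain ⟨q, hq⟩ := ih (par v) (by have := hlen v hv; omega)
          refine ⟨q.concat (hTadj v hv), ?_⟩
          rw [walkWeight_concat, hq, hsum v hv]
  have keyall : ∀ v, ∃ q : T.Walk r v, walkWeight w q = wdist H w r v :=
    fun v => key (P v).length v le_rfl
  have hdist : ∀ v, wdist T w r v ≤ wdist H w r v := by
    intro v
    obtain ⟨q, hq⟩ := keyall v
    exact hq ▸ wdist_le_walkWeight hw q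
  have hTconn : T.Connected := by
    have hpre : T.Preconnected := by
      intro x y
      obtain ⟨qx, _⟩ := keyall x
      obtain ⟨qy, _⟩ := keyall y
      exact qx.reachable.symm.trans qy.reachable
    have := hH.nonempty
    exact ⟨hpre⟩
  refine ⟨T, hTle, ⟨hTconn, ?_⟩, hdist⟩
  -- acyclicity
  intro x c hc
  have hxs : x ∈ c.support := Walk.start_mem_support c
  obtain ⟨m, hms, hmax⟩ := Finset.exists_max_image c.support.toFinset
    (fun v => (P v).length) ⟨x, List.mem_toFinset.2 hxs⟩
  rw [List.mem_toFinset] at hms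
  have hmax' : ∀ y ∈ c.support, (P y).length ≤ (P m).length :=
    fun y hy => hmax y (List.mem_toFinset.2 hy)
  set c' := c.rotate m hms with hc'def
  have hc' : c'.IsCycle := hc.rotate hms
  have hsupsub : ∀ y, y ∈ c'.support → y ∈ c.support := by
    intro y hy
    rcases (Walk.mem_support_iff c').1 hy with rfl | hy
    · exact hms
    · have := (Walk.support_rotate c m hms).mem_iff.1 hy
      rw [Walk.support_eq_cons c]
      exact List.mem_cons.2 (Or.inr this)
  obtain ⟨y₁, h₁, q, hq⟩ : ∃ (y₁ : V) (h1 : T.Adj m y₁) (q : T.Walk y₁ m),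
      c' = Walk.cons h1 q := by
    cases hcc : c' with
    | nil => exact absurd (hc'def ▸ hcc) (hc'.ne_nil ∘ (by intro h; exact h))
    | cons h1 q => exact ⟨_, h1, q, rfl⟩
  obtain ⟨y₂, h₂, q₂, hq₂⟩ := walk_cons_decomp q.reverse h₁.ne
  -- edges of c' are nodup
  have hnodup : c'.edges.Nodup := hc'.isTrail.edges_nodup
  have hqedges : q.edges = q₂.edges.reverse ++ [s(m, y₂)] := by
    have : q.edges = q.reverse.edges.reverse := by rw [Walk.edges_reverse, List.reverse_reverse]
    rw [this, hq₂, Walk.edges_cons]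
    simp
  have hne12 : y₁ ≠ y₂ := by
    intro h12
    rw [hq, Walk.edges_cons, hqedges] at hnodup
    have h1 := hnodup.notMem
    subst h12
    exact h1 (List.mem_append.2 (Or.inr (List.mem_singleton.2 rfl)))
  have hy₁s : y₁ ∈ c.support := by
    apply hsupsub; rw [hq, Walk.support_cons]
    exact List.mem_cons.2 (Or.inr q.start_mem_support)
  have hy₂s : y₂ ∈ c.support := by
    apply hsupsub; rw [hq, Walk.support_cons]
    refine List.mem_cons.2 (Or.inr ?_)
    have : y₂ ∈ q.reverse.support := by
      rw [hq₂, Walk.support_cons]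
      exact List.mem_cons.2 (Or.inr q₂.start_mem_support)
    rwa [Walk.support_reverse, List.mem_reverse] at this
  have e1 := hadj_char m y₁ h₁ (hmax' y₁ hy₁s)
  have e2 := hadj_char m y₂ h₂ (hmax' y₂ hy₂s)
  exact hne12 (e1.2.trans e2.2.symm)

end SPT


section Tour

variable {V : Type*} [Fintype V] {w : Sym2 V → ℝ}

lemma exists_boundary {M : SimpleGraph V} {S : Set V} :
    ∀ {a b : V}, M.Walk a b → a ∈ S → b ∉ S →
    ∃ u y, M.Adj u y ∧ u ∈ S ∧ y ∉ S := by
  intro a b p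
  induction p with
  | nil => intro ha hb; exact absurd ha hb
  | @cons a c b h q ih =>
      intro ha hb
      by_cases hc : c ∈ S
      · exact ih hc hb
      · exact ⟨a, c, h, ha, hc⟩

/-- A closed walk visiting all vertices, of weight at most twice the graph weight. -/
lemma exists_tour {M : SimpleGraph V} (hw : ∀ e, 0 ≤ w e) (hM : M.Connected) (r : V) :
    ∃ W : M.Walk r r, (∀ v, v ∈ W.support) ∧ walkWeight w W ≤ 2 * gweight M w := by
  classical
  suffices h : ∀ (k : ℕ) (W : M.Walk r r) (F : Finset (Sym2 V)),
      (↑F ⊆ M.edgeSet) → (∀ e ∈ F, ∀ x ∈ e, x ∈ W.support) →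
      walkWeight w W ≤ 2 * ∑ e ∈ F, w e →
      ((Finset.univ : Finset V) \ W.support.toFinset).card ≤ k →
      ∃ W' : M.Walk r r, (∀ v, v ∈ W'.support) ∧ walkWeight w W' ≤ 2 * gweight M w by
    refine h (Fintype.card V) Walk.nil ∅ (by simp) (by simp) ?_ ?_
    · simp [walkWeight_nil]
    · exact le_trans (Finset.card_le_univ _) (by simp)
  intro k
  induction k with
  | zero =>
      intro W F hF hFsup hWF hcard
      by_cases hall : ∀ v, v ∈ W.support
      · refine ⟨W, hall, le_trans hWF ?_⟩
        have : ∑ e ∈ F, w e ≤ gweight M w := by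
          rw [gweight_eq M w inferInstance]
          refine Finset.sum_le_sum_of_subset_of_nonneg ?_ fun e _ _ => hw e
          intro e he
          rw [Set.mem_toFinset]
          exact hF he
        linarith
      · exfalso
        push_neg at hall
        obtain ⟨v₀, hv₀⟩ := hall
        have : v₀ ∈ (Finset.univ : Finset V) \ W.support.toFinset := by
          simp [List.mem_toFinset, hv₀]
        have := Finset.card_pos.2 ⟨v₀, this⟩
        omega
  | succ k ih =>
      intro W F hF hFsup hWF hcard
      by_cases hall : ∀ v, v ∈ W.support
      · refine ⟨W, hall, le_trans hWF ?_⟩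
        have : ∑ e ∈ F, w e ≤ gweight M w := by
          rw [gweight_eq M w inferInstance]
          refine Finset.sum_le_sum_of_subset_of_nonneg ?_ fun e _ _ => hw e
          intro e he
          rw [Set.mem_toFinset]
          exact hF he
        linarith
      · push_neg at hall
        obtain ⟨v₀, hv₀⟩ := hall
        obtain ⟨u, y, huy, hu, hy⟩ :=
          exists_boundary (S := {x | x ∈ W.support}) ((hM.preconnected r v₀).some)
            W.start_mem_support hv₀
        set W₁ : M.Walk r r := (W.takeUntil u hu).append
          (Walk.cons huy (Walk.cons huy.symm (W.dropUntil u hu))) with hW₁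
        have hsupmono : ∀ x, x ∈ W.support → x ∈ W₁.support := by
          intro x hx
          rw [← Walk.take_spec W hu, Walk.mem_support_append_iff] at hx
          rw [hW₁, Walk.mem_support_append_iff]
          rcases hx with hx | hx
          · exact Or.inl hx
          · right
            rw [Walk.support_cons, Walk.support_cons]
            exact List.mem_cons.2 (Or.inr (List.mem_cons.2 (Or.inr hx)))
        have hysup : y ∈ W₁.support := by
          rw [hW₁, Walk.mem_support_append_iff]
          right
          rw [Walk.support_cons, Walk.support_cons]
          exact List.mem_cons.2 (Or.inr (List.mem_cons.2 (Or.inl rfl)))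
        have hWweq : walkWeight w W = walkWeight w (W.takeUntil u hu) +
            walkWeight w (W.dropUntil u hu) := by
          rw [← walkWeight_append]
          rw [Walk.take_spec W hu]
        have hW₁w : walkWeight w W₁ = walkWeight w W + 2 * w s(u, y) := by
          rw [hW₁, walkWeight_append, walkWeight_cons, walkWeight_cons, hWweq]
          rw [show s(y, u) = s(u, y) from Sym2.eq_swap]
          ring
        have hnotF : s(u, y) ∉ F := by
          intro hmem
          exact hy (hFsup _ hmem y (Sym2.mem_iff.2 (Or.inr rfl)))
        refine ih W₁ (insert s(u, y) F) ?_ ?_ ?_ ?_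
        · intro e he
          rcases Finset.mem_insert.1 (by exact_mod_cast he) with rfl | he
          · exact (M.mem_edgeSet).2 huy
          · exact hF he
        · intro e he x hx
          rcases Finset.mem_insert.1 he with rfl | he
          · rcases Sym2.mem_iff.1 hx with rfl | rfl
            · exact hsupmono _ hu
            · exact hysup
          · exact hsupmono _ (hFsup e he x hx)
        · rw [Finset.sum_insert hnotF, hW₁w]
          linarith
        · have hsub : (Finset.univ : Finset V) \ W₁.support.toFinset ⊆
              ((Finset.univ : Finset V) \ W.support.toFinset).erase y := by
            intro x hx
            rw [Finset.mem_sdiff, List.mem_toFinset] at hx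
            rw [Finset.mem_erase, Finset.mem_sdiff, List.mem_toFinset]
            refine ⟨?_, hx.1, fun hmem => hx.2 (hsupmono _ hmem)⟩
            rintro rfl
            exact hx.2 hysup
          have hyW : y ∈ (Finset.univ : Finset V) \ W.support.toFinset := by
            rw [Finset.mem_sdiff, List.mem_toFinset]
            exact ⟨Finset.mem_univ _, hy⟩
          have h1 := Finset.card_le_card hsub
          have h2 := Finset.card_erase_of_mem hyW
          have h3 := Finset.card_pos.2 ⟨y, hyW⟩
          omega

end Tour


section Core

variable {V : Type*} [Fintype V] {w : Sym2 V → ℝ}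

lemma rec_core {G M : SimpleGraph V} (hw : ∀ e, 0 ≤ w e) (hG : G.Connected)
    (hMc : M.Connected) (r : V) {α : ℝ} (hα : 1 < α) :
    ∀ {a : V} (q : M.Walk a r) (H : SimpleGraph V), M ≤ H → H ≤ G → ∀ D : ℝ,
      wdist H w r a ≤ D → D ≤ α * wdist G w r a →
      ∃ H' : SimpleGraph V, M ≤ H' ∧ H ≤ H' ∧ H' ≤ G ∧
        gweight H' w ≤ gweight H w + (D + walkWeight w q) / (α - 1) ∧
        ∀ x ∈ q.support, wdist H' w r x ≤ α * wdist G w r x := by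
  classical
  have hα1 : (0:ℝ) < α - 1 := by linarith
  intro a q
  induction q with
  | nil =>
      intro H hMH hHG D hD1 hD2
      have hD0 : 0 ≤ D := le_trans (wdist_nonneg hw H _ _) hD1
      refine ⟨H, hMH, le_rfl, hHG, ?_, ?_⟩
      · rw [walkWeight_nil]
        have : 0 ≤ (D + 0) / (α - 1) := by positivity
        linarith
      · intro x hx
        rw [Walk.support_nil, List.mem_singleton] at hx
        subst hx
        exact le_trans hD1 hD2
  | @cons a c r h q ih =>
      intro H hMH hHG D hD1 hD2
      have hHc : H.Connected := hMc.mono hMH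
      have hwq : 0 ≤ walkWeight w q := walkWeight_nonneg hw q
      have hstep : wdist H w r c ≤ D + w s(a, c) := by
        refine le_trans (wdist_le_adj hw (hMH h) (hHc.preconnected r a)) ?_
        linarith
      by_cases hcase : D + w s(a, c) ≤ α * wdist G w r c
      · obtain ⟨H', h1, h2, h3, h4, h5⟩ := ih H hMH hHG (D + w s(a, c)) hstep hcase
        refine ⟨H', h1, h2, h3, ?_, ?_⟩
        · rw [walkWeight_cons]
          have : (D + w s(a, c) + walkWeight w q) / (α - 1) =
              (D + (w s(a, c) + walkWeight w q)) / (α - 1) := by ring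
          rw [← this]
          exact h4
        · intro x hx
          rw [Walk.support_cons] at hx
          rcases List.mem_cons.1 hx with rfl | hx
          · calc wdist H' w r x ≤ wdist H w r x :=
                  wdist_anti hw h2 (hHc.preconnected r x)
              _ ≤ D := hD1
              _ ≤ α * wdist G w r x := hD2
          · exact h5 x hx
      · push_neg at hcase
        have hdc0 : 0 ≤ wdist G w r c := wdist_nonneg hw G r c
        obtain ⟨p, hpath, hpw⟩ := exists_walk_attained hw (hG.preconnected r c)
        set A : SimpleGraph V := SimpleGraph.fromEdgeSet {e | e ∈ p.edges} with hA
        have hAG : A ≤ G := by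
          have h0 : A ≤ SimpleGraph.fromEdgeSet G.edgeSet := by
            rw [hA]
            exact fromEdgeSet_mono fun e he => p.edges_subset_edgeSet he
          rwa [fromEdgeSet_edgeSet] at h0
        set H₁ := H ⊔ A with hH₁
        have hMH₁ : M ≤ H₁ := le_trans hMH le_sup_left
        have hH₁G : H₁ ≤ G := sup_le hHG hAG
        have hpe : ∀ e ∈ p.edges, e ∈ H₁.edgeSet := by
          intro e he
          apply edgeSet_mono (le_sup_right : A ≤ H₁)
          rw [hA, edgeSet_fromEdgeSet]
          exact ⟨he, fun hd => (G.not_isDiag_of_mem_edgeSet (p.edges_subset_edgeSet he)) hd⟩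
        have hdistc : wdist H₁ w r c ≤ wdist G w r c := by
          have := wdist_le_walkWeight hw (p.transfer H₁ hpe)
          rwa [walkWeight_transfer, hpw] at this
        have hgwA : gweight A w ≤ wdist G w r c := by
          rw [← hpw, gweight_eq A w inferInstance]
          have hsub : (@Set.toFinset _ A.edgeSet inferInstance) ⊆ p.edges.toFinset := by
            intro e he
            rw [Set.mem_toFinset, hA, edgeSet_fromEdgeSet] at he
            exact List.mem_toFinset.2 he.1
          calc ∑ e ∈ @Set.toFinset _ A.edgeSet inferInstance, w e
              ≤ ∑ e ∈ p.edges.toFinset, w e :=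
                Finset.sum_le_sum_of_subset_of_nonneg hsub fun e _ _ => hw e
            _ = (p.edges.map w).sum := List.sum_toFinset w hpath.edges_nodup
            _ = walkWeight w p := rfl
        have hgw₁ : gweight H₁ w ≤ gweight H w + wdist G w r c :=
          le_trans (gweight_sup_le hw H A) (by linarith)
        obtain ⟨H', h1, h2, h3, h4, h5⟩ := ih H₁ hMH₁ hH₁G (wdist G w r c) hdistc
          (le_mul_of_one_le_left hdc0 hα.le)
        refine ⟨H', h1, le_trans le_sup_left h2, h3, ?_, ?_⟩
        · rw [walkWeight_cons]
          have harith : gweight H w + wdist G w r c +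
              (wdist G w r c + walkWeight w q) / (α - 1) ≤
              gweight H w + (D + (w s(a, c) + walkWeight w q)) / (α - 1) := by
            have key : wdist G w r c * (α - 1) + (wdist G w r c + walkWeight w q) ≤
                D + (w s(a, c) + walkWeight w q) := by nlinarith
            have e1 : wdist G w r c + (wdist G w r c + walkWeight w q) / (α - 1) =
                (wdist G w r c * (α - 1) + (wdist G w r c + walkWeight w q)) / (α - 1) := by
              field_simp
              try ring
            have e2 : (wdist G w r c * (α - 1) + (wdist G w r c + walkWeight w q)) / (α - 1) ≤
                (D + (w s(a, c) + walkWeight w q)) / (α - 1) :=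
              (div_le_div_iff_of_pos_right hα1).2 key
            linarith
          exact le_trans (by linarith) harith
        · intro x hx
          rw [Walk.support_cons] at hx
          rcases List.mem_cons.1 hx with rfl | hx
          · have s1 : wdist H' w r x ≤ wdist H₁ w r x :=
              wdist_anti hw h2 ((hMc.mono hMH₁).preconnected r x)
            have s2 : wdist H₁ w r x ≤ wdist H w r x :=
              wdist_anti hw le_sup_left (hHc.preconnected r x)
            calc wdist H' w r x ≤ wdist H w r x := le_trans s1 s2
              _ ≤ D := hD1
              _ ≤ α * wdist G w r x := hD2
          · exact h5 x hx

end Core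

end LASTAux

open LASTAux in
/-- Every connected nonnegatively weighted graph contains an
`(α, β)`-LAST rooted at `r` for any `α > 1` and `β ≥ 1 + 2/(α-1)`. -/
theorem exists_LAST {V : Type*} [Fintype V] (G : SimpleGraph V) (w : Sym2 V → ℝ)
    (hw : ∀ e, 0 ≤ w e) (hG : G.Connected) (r : V) (α β : ℝ)
    (hα : 1 < α) (hβ : 1 + 2 / (α - 1) ≤ β) :
    ∃ T : SimpleGraph V, T ≤ G ∧ T.IsTree ∧
      (∀ v, wdist T w r v ≤ α * wdist G w r v) ∧
      ∀ M : SimpleGraph V, M ≤ G → M.IsTree →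
        (∀ M' : SimpleGraph V, M' ≤ G → M'.IsTree → gweight M w ≤ gweight M' w) →
        gweight T w ≤ β * gweight M w := by
  classical
  have hα1 : (0:ℝ) < α - 1 := by linarith
  -- G has a spanning tree
  obtain ⟨T₀, hT₀G, hT₀tree, -⟩ := exists_spt hw hG r
  -- a minimum spanning tree M₀
  obtain ⟨M₀, hM₀mem, hM₀min⟩ := Finset.exists_min_image
    ((Finset.univ : Finset (SimpleGraph V)).filter fun T => T ≤ G ∧ T.IsTree)
    (fun T => gweight T w)
    ⟨T₀, Finset.mem_filter.2 ⟨Finset.mem_univ _, hT₀G, hT₀tree⟩⟩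
  obtain ⟨hM₀G, hM₀tree⟩ := (Finset.mem_filter.1 hM₀mem).2
  have hM₀conn : M₀.Connected := hM₀tree.isConnected
  -- Euler-style tour of M₀
  obtain ⟨W, hWsup, hWw⟩ := exists_tour hw hM₀conn r
  -- build the light graph H'
  have hD1 : wdist M₀ w r r ≤ 0 := wdist_self_le hw M₀ r
  have hD2 : (0:ℝ) ≤ α * wdist G w r r :=
    mul_nonneg (by linarith) (wdist_nonneg hw G r r)
  obtain ⟨H', hMH', hM₀H', hH'G, hgw, hdist⟩ :=
    rec_core hw hG hM₀conn r hα W M₀ le_rfl hM₀G 0 hD1 hD2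
  have hH'conn : H'.Connected := hM₀conn.mono hMH'
  -- shortest path tree of H'
  obtain ⟨T, hTH', hTtree, hTdist⟩ := exists_spt hw hH'conn r
  refine ⟨T, le_trans hTH' hH'G, hTtree, ?_, ?_⟩
  · intro v
    exact le_trans (hTdist v) (hdist v (hWsup v))
  · intro M hMG hMtree hMmin
    have h1 : gweight M₀ w ≤ gweight M w :=
      hM₀min M (Finset.mem_filter.2 ⟨Finset.mem_univ _, hMG, hMtree⟩)
    have h2 : gweight T w ≤ gweight H' w := gweight_mono hw hTH'
    have h5 : 0 ≤ gweight M₀ w := gweight_nonneg hw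
    have hβ0 : (0:ℝ) ≤ β := by
      have : (0:ℝ) ≤ 2 / (α - 1) := by positivity
      linarith
    have h6 : gweight T w ≤ gweight M₀ w + (0 + walkWeight w W) / (α - 1) :=
      le_trans h2 hgw
    have h7 : (0 + walkWeight w W) / (α - 1) ≤ (2 * gweight M₀ w) / (α - 1) := by
      apply (div_le_div_iff_of_pos_right hα1).2
      linarith
    have h8 : gweight T w ≤ (1 + 2 / (α - 1)) * gweight M₀ w := by
      have e1 : (2 * gweight M₀ w) / (α - 1) = 2 / (α - 1) * gweight M₀ w := by ring
      have : gweight T w ≤ gweight M₀ w + 2 / (α - 1) * gweight M₀ w := by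
        rw [← e1]; linarith
      linarith [this, (by ring : (1 + 2 / (α - 1)) * gweight M₀ w =
        gweight M₀ w + 2 / (α - 1) * gweight M₀ w)]
    calc gweight T w ≤ (1 + 2 / (α - 1)) * gweight M₀ w := h8
      _ ≤ β * gweight M₀ w := mul_le_mul_of_nonneg_right hβ h5
      _ ≤ β * gweight M w := mul_le_mul_of_nonneg_left h1 hβ0
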